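/- For all natural numbers m and n, the lattices B(m,n) and B(n,m) are dually isomorphic. -/

import Mathlib

/-- The carrier of the lattice `B(m,n)`, obtained from the Boolean lattice of all
subsets of the `m + n` atoms `a₁,…,a_m,b₁,…,b_n` (modelled as `Fin m ⊕ Fin n`)
by doubling the element `A = a₁ ∨ ⋯ ∨ a_m` (the set of left atoms): the doubled
element `A` is replaced by the two copies `(A, false) < (A, true)`. -/
def Bcar (m n : ℕ) : Type :=
  {p : Set (Fin m ⊕ Fin n) × Bool // p.2 = true → p.1 = Set.range Sum.inl}

/-- The order of `B(m,n)`: `(s, b) ≤ (t, c)` iff `s ⊆ t`, and `b ≤ c` when `s = t`.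
This is the interval-doubling order: a new element `p = (A, true)` is added with
`aᵢ ≤ (A, false) < p` for every `i ≤ m` and `p < A ∪ {b_j}` for every `j ≤ n`. -/
def Ble {m n : ℕ} (x y : Bcar m n) : Prop :=
  x.1.1 ⊆ y.1.1 ∧ (x.1.1 = y.1.1 → (x.1.2 = true → y.1.2 = true))

/-- For all natural numbers `m` and `n`, the lattices `B(m,n)` and `B(n,m)` are
dually isomorphic: there is a bijection reversing the order in both directions. -/
lemma swap_pre_range {m n : ℕ} :
    (Sum.swap ⁻¹' (Set.range Sum.inr : Set (Fin m ⊕ Fin n)) : Set (Fin n ⊕ Fin m))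
      = Set.range Sum.inl := by
  ext z; cases z <;> simp

open Classical in
noncomputable def Bdual {m n : ℕ} (x : Bcar m n) : Bcar n m :=
  ⟨(Sum.swap ⁻¹' x.1.1ᶜ, if x.1.1 = Set.range Sum.inl then !x.1.2 else false), by
    intro h
    split at h
    case isTrue hs =>
      rw [hs, Set.compl_range_inl, swap_pre_range]
    case isFalse => simp at h⟩

lemma swap_pre_inj {m n : ℕ} : Function.Injective
    (fun s : Set (Fin m ⊕ Fin n) => (Sum.swap ⁻¹' s : Set (Fin n ⊕ Fin m))) :=
  Function.Surjective.preimage_injective (fun y => ⟨Sum.swap y, by cases y <;> simp⟩)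

lemma pre_compl_eq_range {m n : ℕ} (s : Set (Fin m ⊕ Fin n)) :
    (Sum.swap ⁻¹' sᶜ : Set (Fin n ⊕ Fin m)) = Set.range Sum.inl ↔ s = Set.range Sum.inl := by
  constructor
  · intro h
    have h2 : (Sum.swap ⁻¹' sᶜ : Set (Fin n ⊕ Fin m)) = Sum.swap ⁻¹' (Set.range Sum.inr) := by
      rw [swap_pre_range]; exact h
    have h3 := swap_pre_inj h2
    rw [← compl_compl s, h3, Set.compl_range_inr]
  · intro h; rw [h, Set.compl_range_inl, swap_pre_range]

lemma swap_pre_subset {m n : ℕ} {s t : Set (Fin m ⊕ Fin n)} :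
    (Sum.swap ⁻¹' s : Set (Fin n ⊕ Fin m)) ⊆ Sum.swap ⁻¹' t ↔ s ⊆ t := by
  constructor
  · intro h z hz
    have := h (a := Sum.swap z) (by simpa)
    simpa using this
  · intro h z hz; exact h hz

lemma Ble_dual {m n : ℕ} (x y : Bcar m n) : Ble x y ↔ Ble (Bdual y) (Bdual x) := by
  unfold Ble Bdual
  simp only
  rw [swap_pre_subset, Set.compl_subset_compl]
  constructor
  · rintro ⟨h1, h2⟩
    refine ⟨h1, ?_⟩
    intro heq
    have hst : x.1.1 = y.1.1 := by
      have h3 := swap_pre_inj heq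
      have h4 := congrArg compl h3
      simpa using h4.symm
    rw [hst]
    by_cases hA : y.1.1 = Set.range Sum.inl
    · simp only [if_pos hA]
      intro hb
      cases hcx : x.1.2
      · rfl
      · exact absurd (h2 hst hcx) (by simp_all)
    · simp [hA]
  · rintro ⟨h1, h2⟩
    refine ⟨h1, ?_⟩
    intro heq hb
    rw [heq] at h2
    by_cases hA : y.1.1 = Set.range Sum.inl
    · have h3 := h2 rfl
      simp only [if_pos hA] at h3
      cases hcy : y.1.2
      · have h4 := h3 (by simp [hcy])
        simp [hb] at h4
      · rfl
    · exact absurd (heq ▸ x.2 hb) hA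

lemma Bdual_Bdual {m n : ℕ} (x : Bcar m n) : Bdual (Bdual x) = x := by
  apply Subtype.ext
  apply Prod.ext
  · show Sum.swap ⁻¹' (Sum.swap ⁻¹' x.1.1ᶜ)ᶜ = x.1.1
    rw [← Set.preimage_compl, compl_compl]
    ext z; cases z <;> simp
  · simp only [Bdual]
    by_cases hA : x.1.1 = Set.range Sum.inl
    · have h1 : (Sum.swap ⁻¹' x.1.1ᶜ : Set (Fin n ⊕ Fin m)) = Set.range Sum.inl :=
        (pre_compl_eq_range _).2 hA
      simp only [if_pos h1, if_pos hA, Bool.not_not]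
    · have h1 : ¬ ((Sum.swap ⁻¹' x.1.1ᶜ : Set (Fin n ⊕ Fin m)) = Set.range Sum.inl) :=
        fun h => hA ((pre_compl_eq_range _).1 h)
      have hb : x.1.2 = false := by
        cases hb : x.1.2
        · rfl
        · exact absurd (x.2 hb) hA
      simp only [if_neg h1, hb]

theorem stmt18 (m n : ℕ) :
    ∃ e : Bcar m n ≃ Bcar n m, ∀ x y : Bcar m n, Ble x y ↔ Ble (e y) (e x) := by
  exact ⟨⟨Bdual, Bdual, Bdual_Bdual, Bdual_Bdual⟩, fun x y => Ble_dual x y⟩
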